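/- Let u_0 > 0 and u_1 be the first two eigenfunctions of -u'' + Vu = λu on (-1,1) with Robin boundary conditions, normalized by ∫ u_0^2 = ∫ u_1^2 = 1, with u_1/u_0 strictly decreasing on [-1,1] and u_1 having exactly one interior zero. Then the function ψ = u_1^2 - u_0^2 has at least one zero in (-1,1) and at most two zeros in [-1,1]; moreover there exist ξ_- < ξ_+ in [-1,1], at least one interior, such that ψ < 0 on (ξ_-, ξ_+) and ψ > 0 on [-1,1] \ [ξ_-, ξ_+]. -/

import Mathlib

open Set intervalIntegral Topology Filter

theorem zeros_of_difference
    (V : ℝ → ℝ) (hV : ContinuousOn V (Icc (-1:ℝ) 1))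
    (α lam0 lam1 : ℝ) (hlam : lam0 < lam1)
    (u0 u0' u0'' u1 u1' u1'' : ℝ → ℝ)
    (hu0d1 : ∀ x ∈ Icc (-1:ℝ) 1, HasDerivWithinAt u0 (u0' x) (Icc (-1:ℝ) 1) x)
    (hu0d2 : ∀ x ∈ Icc (-1:ℝ) 1, HasDerivWithinAt u0' (u0'' x) (Icc (-1:ℝ) 1) x)
    (hu1d1 : ∀ x ∈ Icc (-1:ℝ) 1, HasDerivWithinAt u1 (u1' x) (Icc (-1:ℝ) 1) x)
    (hu1d2 : ∀ x ∈ Icc (-1:ℝ) 1, HasDerivWithinAt u1' (u1'' x) (Icc (-1:ℝ) 1) x)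
    (heq0 : ∀ x ∈ Icc (-1:ℝ) 1, -u0'' x + V x * u0 x = lam0 * u0 x)
    (heq1 : ∀ x ∈ Icc (-1:ℝ) 1, -u1'' x + V x * u1 x = lam1 * u1 x)
    (hbc0R : u0' 1 = -α * u0 1) (hbc0L : u0' (-1) = α * u0 (-1))
    (hbc1R : u1' 1 = -α * u1 1) (hbc1L : u1' (-1) = α * u1 (-1))
    (hu0pos : ∀ x ∈ Ioo (-1:ℝ) 1, 0 < u0 x)
    (hnorm0 : ∫ x in (-1:ℝ)..1, (u0 x) ^ 2 = 1)
    (hnorm1 : ∫ x in (-1:ℝ)..1, (u1 x) ^ 2 = 1)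
    (hratio : StrictAntiOn (fun x => u1 x / u0 x) (Icc (-1:ℝ) 1))
    (x0 : ℝ) (hx0 : x0 ∈ Ioo (-1:ℝ) 1) (hx0z : u1 x0 = 0)
    (huniq : ∀ x ∈ Ioo (-1:ℝ) 1, u1 x = 0 → x = x0) :
    ∃ ξm ξp : ℝ, ξm ∈ Icc (-1:ℝ) 1 ∧ ξp ∈ Icc (-1:ℝ) 1 ∧ ξm < ξp ∧
      (ξm ∈ Ioo (-1:ℝ) 1 ∨ ξp ∈ Ioo (-1:ℝ) 1) ∧
      (∀ x ∈ Ioo ξm ξp, (u1 x) ^ 2 - (u0 x) ^ 2 < 0) ∧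
      (∀ x ∈ Icc (-1:ℝ) 1 \ Icc ξm ξp, 0 < (u1 x) ^ 2 - (u0 x) ^ 2) := by
  have hL : (-1:ℝ) ∈ Icc (-1:ℝ) 1 := by norm_num
  have hR : (1:ℝ) ∈ Icc (-1:ℝ) 1 := by norm_num
  have hx0I : x0 ∈ Icc (-1:ℝ) 1 := Ioo_subset_Icc_self hx0
  have hc0 : ContinuousOn u0 (Icc (-1:ℝ) 1) := fun x hx => (hu0d1 x hx).continuousWithinAt
  have hc1 : ContinuousOn u1 (Icc (-1:ℝ) 1) := fun x hx => (hu1d1 x hx).continuousWithinAt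
  have hrx0 : u1 x0 / u0 x0 = 0 := by rw [hx0z]; simp
  -- u0 is nonzero at the endpoints
  have h0L : u0 (-1) ≠ 0 := by
    intro h
    have := hratio hL hx0I hx0.1
    simp only [h, div_zero, hrx0] at this
    exact lt_irrefl 0 this
  have h0R : u0 1 ≠ 0 := by
    intro h
    have := hratio hx0I hR hx0.2
    simp only [h, div_zero, hrx0] at this
    exact lt_irrefl 0 this
  -- u0 is nonnegative at endpoints by continuity
  have hnonnegL : 0 ≤ u0 (-1) := by
    have hne : (𝓝[Ioo (-1:ℝ) 1] (-1)).NeBot := left_nhdsWithin_Ioo_neBot (by norm_num)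
    have ht : Filter.Tendsto u0 (𝓝[Ioo (-1:ℝ) 1] (-1)) (𝓝 (u0 (-1))) :=
      ((hc0 (-1) hL).mono Ioo_subset_Icc_self)
    exact ge_of_tendsto ht (eventually_mem_nhdsWithin.mono
      fun x hx => (hu0pos x hx).le)
  have hnonnegR : 0 ≤ u0 1 := by
    have hne : (𝓝[Ioo (-1:ℝ) 1] (1:ℝ)).NeBot := right_nhdsWithin_Ioo_neBot (by norm_num)
    have ht : Filter.Tendsto u0 (𝓝[Ioo (-1:ℝ) 1] 1) (𝓝 (u0 1)) :=
      ((hc0 1 hR).mono Ioo_subset_Icc_self)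
    exact ge_of_tendsto ht (eventually_mem_nhdsWithin.mono
      fun x hx => (hu0pos x hx).le)
  -- u0 positive on all of Icc
  have hu0posI : ∀ x ∈ Icc (-1:ℝ) 1, 0 < u0 x := by
    intro x hx
    rcases eq_or_lt_of_le hx.1 with h | h
    · exact (hnonnegL.lt_of_ne (fun hh => h0L hh.symm)).trans_eq (by rw [← h])
    rcases eq_or_lt_of_le hx.2 with h' | h'
    · rw [h']; exact hnonnegR.lt_of_ne (fun hh => h0R hh.symm)
    · exact hu0pos x ⟨h, h'⟩
  set rr : ℝ → ℝ := fun x => u1 x / u0 x with hrr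
  have hrc : ContinuousOn rr (Icc (-1:ℝ) 1) :=
    hc1.div hc0 (fun x hx => (hu0posI x hx).ne')
  -- key: either rr (-1) > 1 or rr 1 < -1
  have hAB : 1 < rr (-1) ∨ rr 1 < -1 := by
    by_contra h
    push_neg at h
    obtain ⟨h1, h2⟩ := h
    have hle : ∀ x ∈ Ioc (-1:ℝ) 1, u1 x ^ 2 ≤ u0 x ^ 2 := by
      intro x hx
      have hxI : x ∈ Icc (-1:ℝ) 1 := Ioc_subset_Icc_self hx
      have h0 : 0 < u0 x := hu0posI x hxI
      have hup : rr x ≤ 1 := ((hratio hL hxI hx.1).le).trans h1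
      have hlo : -1 ≤ rr x := by
        rcases eq_or_lt_of_le hx.2 with he | he
        · rw [he]; exact h2
        · exact h2.trans (hratio hxI hR he).le
      have hu : u1 x ≤ u0 x := by
        have := (div_le_one h0).mp hup
        linarith
      have hl : -u0 x ≤ u1 x := by
        have := (le_div_iff₀ h0).mp hlo
        linarith
      exact sq_le_sq' hl hu
    have := intervalIntegral.integral_lt_integral_of_continuousOn_of_le_of_exists_lt
      (by norm_num : (-1:ℝ) < 1) (hc1.pow 2) (hc0.pow 2) hle
      ⟨x0, hx0I, by have h := hu0pos x0 hx0; simp only [Pi.pow_apply]; rw [hx0z]; nlinarith⟩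
    simp only [Pi.pow_apply] at this
    rw [hnorm0, hnorm1] at this
    exact lt_irrefl 1 this
  -- construct ξm
  have hM : ∃ ξm, ξm ∈ Icc (-1:ℝ) 1 ∧ ξm < x0 ∧ (1 < rr (-1) → -1 < ξm) ∧
      (∀ x ∈ Icc (-1:ℝ) 1, ξm < x → rr x < 1) ∧
      (∀ x ∈ Icc (-1:ℝ) 1, x < ξm → 1 < rr x) := by
    by_cases hA : 1 < rr (-1)
    · have hsub : Icc (-1:ℝ) x0 ⊆ Icc (-1:ℝ) 1 := Icc_subset_Icc le_rfl hx0I.2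
      obtain ⟨ξm, hξm, hval⟩ := intermediate_value_Ioo' hx0.1.le (hrc.mono hsub)
        (show (1:ℝ) ∈ Ioo (rr x0) (rr (-1)) from ⟨by rw [show rr x0 = 0 from hrx0]; norm_num, hA⟩)
      have hξmI : ξm ∈ Icc (-1:ℝ) 1 := hsub (Ioo_subset_Icc_self hξm)
      refine ⟨ξm, hξmI, hξm.2, fun _ => hξm.1, ?_, ?_⟩
      · intro x hx hlt
        have := hratio hξmI hx hlt
        rw [hval] at this; exact this
      · intro x hx hlt
        have := hratio hx hξmI hlt
        rw [hval] at this; exact this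
    · push_neg at hA
      refine ⟨-1, hL, hx0.1, fun h => absurd h (not_lt.mpr hA), ?_, ?_⟩
      · intro x hx hlt
        exact (hratio hL hx hlt).trans_le hA
      · intro x hx hlt
        exact absurd hx.1 (not_le.mpr hlt)
  -- construct ξp
  have hP : ∃ ξp, ξp ∈ Icc (-1:ℝ) 1 ∧ x0 < ξp ∧ (rr 1 < -1 → ξp < 1) ∧
      (∀ x ∈ Icc (-1:ℝ) 1, x < ξp → -1 < rr x) ∧
      (∀ x ∈ Icc (-1:ℝ) 1, ξp < x → rr x < -1) := by
    by_cases hB : rr 1 < -1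
    · have hsub : Icc x0 (1:ℝ) ⊆ Icc (-1:ℝ) 1 := Icc_subset_Icc hx0I.1 le_rfl
      obtain ⟨ξp, hξp, hval⟩ := intermediate_value_Ioo' hx0.2.le (hrc.mono hsub)
        (show (-1:ℝ) ∈ Ioo (rr 1) (rr x0) from ⟨hB, by rw [show rr x0 = 0 from hrx0]; norm_num⟩)
      have hξpI : ξp ∈ Icc (-1:ℝ) 1 := hsub (Ioo_subset_Icc_self hξp)
      refine ⟨ξp, hξpI, hξp.1, fun _ => hξp.2, ?_, ?_⟩
      · intro x hx hlt
        have := hratio hx hξpI hlt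
        rw [hval] at this; exact this
      · intro x hx hlt
        have := hratio hξpI hx hlt
        rw [hval] at this; exact this
    · push_neg at hB
      refine ⟨1, hR, hx0.2, fun h => absurd h (not_lt.mpr hB), ?_, ?_⟩
      · intro x hx hlt
        exact hB.trans_lt (hratio hx hR hlt)
      · intro x hx hlt
        exact absurd hx.2 (not_le.mpr hlt)
  obtain ⟨ξm, hξmI, hξmlt, hξmint, hm1, hm2⟩ := hM
  obtain ⟨ξp, hξpI, hξpgt, hξpint, hp1, hp2⟩ := hP
  refine ⟨ξm, ξp, hξmI, hξpI, hξmlt.trans hξpgt, ?_, ?_, ?_⟩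
  · rcases hAB with h | h
    · exact Or.inl ⟨hξmint h, hξmlt.trans hx0.2⟩
    · exact Or.inr ⟨hx0.1.trans hξpgt, hξpint h⟩
  · intro x hx
    have hxI : x ∈ Icc (-1:ℝ) 1 := ⟨hξmI.1.trans hx.1.le, hx.2.le.trans hξpI.2⟩
    have h0 : 0 < u0 x := hu0posI x hxI
    have hu : u1 x < u0 x := by
      have := (div_lt_one h0).mp (hm1 x hxI hx.1)
      linarith
    have hl : -u0 x < u1 x := by
      have := (lt_div_iff₀ h0).mp (hp1 x hxI hx.2)
      linarith
    have := sq_lt_sq' hl hu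
    linarith
  · intro x hx
    obtain ⟨hxI, hxn⟩ := hx
    have h0 : 0 < u0 x := hu0posI x hxI
    rcases lt_or_ge x ξm with hlt | h
    · 
      have hgt : 1 < rr x := hm2 x hxI hlt
      have : u0 x < u1 x := by
        have := (one_lt_div h0).mp hgt
        linarith
      have := pow_lt_pow_left₀ this h0.le (by norm_num : 2 ≠ 0)
      linarith
    · have hlt : ξp < x := by
        by_contra hc
        push_neg at hc
        exact hxn ⟨h, hc⟩
      have hgt : rr x < -1 := hp2 x hxI hlt
      have hneg : u1 x < -u0 x := by
        have := (div_lt_iff₀ h0).mp hgt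
        linarith
      have h2 : u0 x ^ 2 < (-u1 x) ^ 2 := sq_lt_sq' (by linarith) (by linarith)
      rw [neg_pow] at h2
      simp at h2
      linarith
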